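/- The closed unit ball of ℓ¹, endowed with the weak topology, does not have the Pytkeev property. -/

import Mathlib

open Filter Topology Set
open scoped ENNReal Classical

noncomputable section

/-- The Banach space `ℓ¹` of absolutely summable real sequences. -/
abbrev ellOne : Type := lp (fun _ : ℕ => ℝ) 1

/-- The closed unit ball of `ℓ¹` endowed with the weak topology (subspace topology from
`σ(ℓ¹, ℓ^∞)`). -/
abbrev BallW : Type :=
  {x : WeakSpace ℝ ellOne // ‖(toWeakSpace ℝ ellOne).symm x‖ ≤ 1}

/-- `X` has the Pytkeev property. -/
def PytkeevSpace (X : Type*) [TopologicalSpace X] : Prop :=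
  ∀ (A : Set X) (x : X), x ∈ closure A \ A →
    ∃ S : ℕ → Set X, (∀ n, S n ⊆ A ∧ (S n).Infinite) ∧
      ∀ U ∈ nhds x, ∃ n, S n ⊆ U

namespace NPytk
def ee (j : ℕ) : ellOne := lp.single 1 j (1 : ℝ)

lemma norm_ee (j : ℕ) : ‖ee j‖ = 1 := by
  have := lp.norm_single (p := 1) (E := fun _ : ℕ => ℝ) (by norm_num)
    j (1 : ℝ)
  simpa [ee] using this

def vec (j k : ℕ) : ellOne := (2⁻¹ : ℝ) • (ee j - ee k)

lemma norm_vec_le (j k : ℕ) : ‖vec j k‖ ≤ 1 := by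
  have h : ‖ee j - ee k‖ ≤ 2 := by
    calc ‖ee j - ee k‖ ≤ ‖ee j‖ + ‖ee k‖ := norm_sub_le _ _
    _ = 2 := by rw [norm_ee, norm_ee]; norm_num
  calc ‖vec j k‖ = 2⁻¹ * ‖ee j - ee k‖ := by
        rw [vec, norm_smul]; norm_num
  _ ≤ 2⁻¹ * 2 := by nlinarith
  _ = 1 := by norm_num

def mk' (j k : ℕ) : BallW :=
  ⟨toWeakSpace ℝ ellOne (vec j k), by
    rw [LinearEquiv.symm_apply_apply]; exact norm_vec_le j k⟩

def AK : Set BallW := {x | ∃ j k : ℕ, j < k ∧ x = mk' j k}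

def pj (x : BallW) : ℕ := if h : x ∈ AK then h.choose else 0
def pk (x : BallW) : ℕ := if h : x ∈ AK then h.choose_spec.choose else 0

lemma pjk_spec {x : BallW} (h : x ∈ AK) : pj x < pk x ∧ x = mk' (pj x) (pk x) := by
  simp only [pj, pk, dif_pos h]
  exact h.choose_spec.choose_spec

-- the functional
lemma summable_x (x : ellOne) : Summable fun i => ‖x i‖ := by
  simpa using (lp.memℓp x).summable (by norm_num : (0:ℝ) < (1 : ℝ≥0∞).toReal)

lemma bound_aux (f : ℕ → ℝ) (hf : ∀ i, ‖f i‖ ≤ 1) (x : ellOne) (i : ℕ) :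
    ‖f i * x i‖ ≤ ‖x i‖ := by
  rw [norm_mul]
  have := hf i; have := norm_nonneg (x i); nlinarith

lemma summable_aux2 (f : ℕ → ℝ) (hf : ∀ i, ‖f i‖ ≤ 1) (x : ellOne) :
    Summable fun i => ‖f i * x i‖ :=
  (summable_x x).of_nonneg_of_le (fun i => norm_nonneg _) (bound_aux f hf x)

lemma summable_aux (f : ℕ → ℝ) (hf : ∀ i, ‖f i‖ ≤ 1) (x : ellOne) :
    Summable fun i => f i * x i :=
  (summable_aux2 f hf x).of_norm

lemma norm_ellOne (x : ellOne) : ‖x‖ = ∑' i, ‖x i‖ := by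
  have := lp.norm_eq_tsum_rpow (p := 1) (by norm_num) x
  simpa using this

def phi (f : ℕ → ℝ) (hf : ∀ i, ‖f i‖ ≤ 1) : ellOne →L[ℝ] ℝ :=
  LinearMap.mkContinuous
    { toFun := fun x => ∑' i, f i * x i
      map_add' := by
        intro x y
        have h1 := summable_aux f hf x
        have h2 := summable_aux f hf y
        have : ∀ i, f i * (x + y) i = f i * x i + f i * y i := by
          intro i
          rw [lp.coeFn_add, Pi.add_apply]; ring
        dsimp only
        rw [tsum_congr this, Summable.tsum_add h1 h2]
      map_smul' := by
        intro c x
        have h1 := summable_aux f hf x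
        have : ∀ i, f i * (c • x) i = c * (f i * x i) := by
          intro i
          rw [lp.coeFn_smul, Pi.smul_apply, smul_eq_mul]; ring
        dsimp only
        rw [tsum_congr this, tsum_mul_left]
        rfl }
    1
    (by
      intro x
      simp only [LinearMap.coe_mk, AddHom.coe_mk, one_mul]
      have h1 := summable_aux2 f hf x
      calc ‖∑' i, f i * x i‖ ≤ ∑' i, ‖f i * x i‖ := norm_tsum_le_tsum_norm h1
      _ ≤ ∑' i, ‖x i‖ := by
          exact h1.tsum_le_tsum (bound_aux f hf x) (summable_x x)
      _ = ‖x‖ := (norm_ellOne x).symm)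

end NPytk

namespace NPytk

lemma ee_apply_self (j : ℕ) : (ee j : ∀ _ : ℕ, ℝ) j = 1 := lp.single_apply_self _ _ _

lemma ee_apply_ne {j i : ℕ} (h : i ≠ j) : (ee j : ∀ _ : ℕ, ℝ) i = 0 := lp.single_apply_ne _ _ _ h

lemma phi_apply (f : ℕ → ℝ) (hf : ∀ i, ‖f i‖ ≤ 1) (x : ellOne) :
    phi f hf x = ∑' i, f i * x i := rfl

lemma phi_ee (f : ℕ → ℝ) (hf : ∀ i, ‖f i‖ ≤ 1) (j : ℕ) :
    phi f hf (ee j) = f j := by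
  rw [phi_apply]
  rw [tsum_eq_single j]
  · rw [ee_apply_self, mul_one]
  · intro i hi
    rw [ee_apply_ne hi, mul_zero]

lemma phi_vec (f : ℕ → ℝ) (hf : ∀ i, ‖f i‖ ≤ 1) (j k : ℕ) :
    phi f hf (vec j k) = 2⁻¹ * (f j - f k) := by
  rw [vec, map_smul, map_sub, phi_ee, phi_ee, smul_eq_mul]

end NPytk

namespace NPytk

lemma exists_pair (I : Set (ellOne →L[ℝ] ℝ)) (hI : I.Finite) {ε : ℝ} (hε : 0 < ε) :
    ∃ j k : ℕ, j < k ∧ ∀ g ∈ I, ‖g (vec j k)‖ < ε := by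
  haveI : Fintype ↥I := hI.fintype
  set v : ℕ → (↥I → ℝ) := fun n g => g.1 (ee n) with hv
  -- a uniform bound
  obtain ⟨M, hM0, hM⟩ : ∃ M : ℝ, 0 ≤ M ∧ ∀ g : ↥I, ‖g.1‖ ≤ M := by
    rcases (hI.image (fun g => ‖g‖)).bddAbove with ⟨M, hM⟩
    refine ⟨max M 0, le_max_right _ _, fun g => ?_⟩
    exact le_trans (hM ⟨g.1, g.2, rfl⟩) (le_max_left _ _)
  have hball : ∀ n, v n ∈ Metric.closedBall (0 : ↥I → ℝ) M := by
    intro n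
    rw [Metric.mem_closedBall, dist_zero_right]
    refine (pi_norm_le_iff_of_nonneg hM0).2 fun g => ?_
    calc ‖v n g‖ ≤ ‖g.1‖ * ‖ee n‖ := g.1.le_opNorm _
    _ = ‖g.1‖ := by rw [norm_ee, mul_one]
    _ ≤ M := hM g
  have htb : TotallyBounded (Metric.closedBall (0 : ↥I → ℝ) M) :=
    (isCompact_closedBall _ _).totallyBounded
  obtain ⟨t, htfin, hcov⟩ := Metric.totallyBounded_iff.1 htb (ε / 2) (by linarith)
  haveI : Finite ↥t := htfin
  have hchoice : ∀ n : ℕ, ∃ c : ↥t, v n ∈ Metric.ball c.1 (ε / 2) := by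
    intro n
    have := hcov (hball n)
    simp only [Set.mem_iUnion] at this
    obtain ⟨c, hc, hmem⟩ := this
    exact ⟨⟨c, hc⟩, hmem⟩
  choose c hc using hchoice
  obtain ⟨j, k, hjk, hck⟩ := Finite.exists_ne_map_eq_of_infinite c
  have key : ∀ g ∈ I, ‖g (vec j k)‖ < ε := by
    intro g hg
    have hdist : dist (v j) (v k) < ε := by
      calc dist (v j) (v k) ≤ dist (v j) (c j).1 + dist (v k) (c j).1 := dist_triangle_right _ _ _
      _ < ε / 2 + ε / 2 := by
          refine add_lt_add (hc j) ?_
          rw [hck]; exact hc k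
      _ = ε := by ring
    have h1 : ‖g (ee j) - g (ee k)‖ < ε := by
      have h := dist_le_pi_dist (v j) (v k) ⟨g, hg⟩
      rw [dist_eq_norm] at h
      exact lt_of_le_of_lt h hdist
    have h2 : g (vec j k) = 2⁻¹ * (g (ee j) - g (ee k)) := by
      rw [vec, map_smul, map_sub, smul_eq_mul]
    rw [h2, norm_mul]
    have hn : ‖(2⁻¹ : ℝ)‖ = 2⁻¹ := by rw [Real.norm_eq_abs]; norm_num
    rw [hn]
    nlinarith [norm_nonneg (g (ee j) - g (ee k))]
  have keysym : ∀ g ∈ I, ‖g (vec k j)‖ < ε := by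
    intro g hg
    have : vec k j = -vec j k := by
      rw [vec, vec, ← smul_neg, neg_sub]
    rw [this, map_neg, norm_neg]
    exact key g hg
  rcases hjk.lt_or_gt with h | h
  · exact ⟨j, k, h, key⟩
  · exact ⟨k, j, h, keysym⟩

end NPytk

namespace NPytk

lemma vec_apply_fst {j k : ℕ} (h : j ≠ k) : (vec j k : ∀ _ : ℕ, ℝ) j = 2⁻¹ := by
  rw [vec, lp.coeFn_smul, Pi.smul_apply, lp.coeFn_sub, Pi.sub_apply,
    ee_apply_self, ee_apply_ne h, smul_eq_mul]
  norm_num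

def x0 : BallW := ⟨0, by rw [map_zero, norm_zero]; norm_num⟩

lemma x0_not_mem : x0 ∉ AK := by
  rintro ⟨j, k, hjk, hx⟩
  have h0 : (0 : WeakSpace ℝ ellOne) = toWeakSpace ℝ ellOne (vec j k) := by
    exact Subtype.ext_iff.1 hx
  have h1 : (0 : ellOne) = vec j k := by
    have := congrArg (toWeakSpace ℝ ellOne).symm h0
    rwa [map_zero, LinearEquiv.symm_apply_apply] at this
  have h2 : (vec j k : ∀ _ : ℕ, ℝ) j = 0 := by
    rw [← h1]; simp [lp.coeFn_zero]
  rw [vec_apply_fst hjk.ne] at h2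
  norm_num at h2

lemma inducing_weak : IsInducing
    (fun (x : WeakSpace ℝ ellOne) (g : ellOne →L[ℝ] ℝ) => (topDualPairing ℝ ellOne).flip x g) :=
  ⟨rfl⟩

lemma zero_mem_closure : x0 ∈ closure AK := by
  rw [mem_closure_iff_nhds]
  intro U hU
  rw [mem_nhds_induced] at hU
  obtain ⟨V, hV, hVU⟩ := hU
  set B := (topDualPairing ℝ ellOne).flip with hB
  set Fm : WeakSpace ℝ ellOne → (ellOne →L[ℝ] ℝ) → ℝ := fun x g => B x g with hFm
  have hV0 : V ∈ 𝓝 (0 : WeakSpace ℝ ellOne) := hV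
  rw [inducing_weak.nhds_eq_comap, Filter.mem_comap] at hV0
  obtain ⟨W, hW, hWV⟩ := hV0
  have hW0 : W ∈ 𝓝 (0 : (ellOne →L[ℝ] ℝ) → ℝ) := by
    have : (fun g : ellOne →L[ℝ] ℝ => (topDualPairing ℝ ellOne).flip (0 : WeakSpace ℝ ellOne) g)
        = (0 : (ellOne →L[ℝ] ℝ) → ℝ) := by
      funext g; show (topDualPairing ℝ ellOne).flip (0 : ellOne) g = 0; simp
    rwa [this] at hW
  rw [nhds_pi, Filter.mem_pi] at hW0
  obtain ⟨I, hIfin, tt, htt, hIW⟩ := hW0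
  -- pick ε > 0 working for all g ∈ I
  obtain ⟨ε, hε, hball⟩ : ∃ ε : ℝ, 0 < ε ∧ ∀ g ∈ I, Metric.ball (0 : ℝ) ε ⊆ tt g := by
    classical
    have hex : ∀ g : ellOne →L[ℝ] ℝ, ∃ δ : ℝ, 0 < δ ∧ Metric.ball (0 : ℝ) δ ⊆ tt g := by
      intro g
      have := htt g
      rcases Metric.mem_nhds_iff.1 this with ⟨δ, hδ, hsub⟩
      exact ⟨δ, hδ, by simpa using hsub⟩
    choose δ hδpos hδsub using hex
    rcases hIfin.toFinset.eq_empty_or_nonempty with hF | hF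
    · refine ⟨1, one_pos, fun g hg => ?_⟩
      exfalso
      have : g ∈ hIfin.toFinset := hIfin.mem_toFinset.2 hg
      rw [hF] at this
      simp at this
    · refine ⟨hIfin.toFinset.inf' hF δ, ?_, fun g hg => ?_⟩
      · obtain ⟨g, hg, hgeq⟩ := Finset.exists_mem_eq_inf' hF δ
        rw [hgeq]; exact hδpos g
      · refine Set.Subset.trans (Metric.ball_subset_ball ?_) (hδsub g)
        exact Finset.inf'_le δ (hIfin.mem_toFinset.2 hg)
  obtain ⟨j, k, hjk, hsmall⟩ := exists_pair I hIfin hε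
  refine ⟨mk' j k, ?_, j, k, hjk, rfl⟩
  apply hVU
  show ((mk' j k : BallW) : WeakSpace ℝ ellOne) ∈ V
  apply hWV
  show Fm ((mk' j k : BallW) : WeakSpace ℝ ellOne) ∈ W
  apply hIW
  intro g hg
  apply hball g hg
  rw [Metric.mem_ball, dist_zero_right]
  have : Fm ((mk' j k : BallW) : WeakSpace ℝ ellOne) g = g (vec j k) := rfl
  rw [this]
  exact hsmall g hg

end NPytk

namespace NPytk

section Greedy

variable (T : ℕ → Set BallW) (hT : ∀ n, T n ⊆ AK ∧ (T n).Infinite)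
include hT

lemma exists_fresh (F : Finset ℕ) (n : ℕ) :
    ∃ x, x ∈ T n ∧ ¬(pj x ∈ F ∧ pk x ∈ F) := by
  by_contra hcon
  push_neg at hcon
  have hsub : T n ⊆ (fun p : ℕ × ℕ => mk' p.1 p.2) '' ((F : Set ℕ) ×ˢ (F : Set ℕ)) := by
    intro x hx
    have hmem := (hT n).1 hx
    have hspec := pjk_spec hmem
    exact ⟨(pj x, pk x), ⟨(hcon x hx).1, (hcon x hx).2⟩, hspec.2.symm⟩
  have hfin : ((fun p : ℕ × ℕ => mk' p.1 p.2) '' ((F : Set ℕ) ×ˢ (F : Set ℕ))).Finite :=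
    (F.finite_toSet.prod F.finite_toSet).image _
  exact (hT n).2 (hfin.subset hsub)

def pick (F : Finset ℕ) (n : ℕ) : BallW := (exists_fresh T hT F n).choose

lemma pick_mem (F : Finset ℕ) (n : ℕ) : pick T hT F n ∈ T n :=
  (exists_fresh T hT F n).choose_spec.1

lemma pick_fresh (F : Finset ℕ) (n : ℕ) :
    ¬(pj (pick T hT F n) ∈ F ∧ pk (pick T hT F n) ∈ F) :=
  (exists_fresh T hT F n).choose_spec.2

def stepKX (K X : Finset ℕ) (x : BallW) : Finset ℕ × Finset ℕ :=
  if pj x ∈ K then (K, insert (pk x) X)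
  else if pj x ∈ X then (insert (pk x) K, X)
  else if pk x ∈ K then (K, insert (pj x) X)
  else if pk x ∈ X then (insert (pj x) K, X)
  else (insert (pj x) K, insert (pk x) X)

omit T hT in
lemma stepKX_mono (K X : Finset ℕ) (x : BallW) :
    K ⊆ (stepKX K X x).1 ∧ X ⊆ (stepKX K X x).2 := by
  rw [stepKX]
  split_ifs <;> constructor <;> simp [Finset.subset_insert, Finset.Subset.refl]

omit T hT in
lemma stepKX_disjoint {K X : Finset ℕ} (hd : Disjoint K X) {x : BallW}
    (hfresh : ¬(pj x ∈ K ∪ X ∧ pk x ∈ K ∪ X)) (hne : pj x ≠ pk x) :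
    Disjoint (stepKX K X x).1 (stepKX K X x).2 := by
  rw [stepKX]
  split_ifs with h1 h2 h3 h4
  · have hpk : pk x ∉ K ∪ X := fun hk => hfresh ⟨Finset.mem_union_left _ h1, hk⟩
    rw [Finset.mem_union] at hpk; push_neg at hpk
    exact Finset.disjoint_insert_right.2 ⟨hpk.1, hd⟩
  · have hpk : pk x ∉ K ∪ X := fun hk => hfresh ⟨Finset.mem_union_right _ h2, hk⟩
    rw [Finset.mem_union] at hpk; push_neg at hpk
    exact Finset.disjoint_insert_left.2 ⟨hpk.2, hd⟩
  · have hpj : pj x ∉ K ∪ X := by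
      rw [Finset.mem_union]; push_neg; exact ⟨h1, h2⟩
    rw [Finset.mem_union] at hpj; push_neg at hpj
    exact Finset.disjoint_insert_right.2 ⟨hpj.1, hd⟩
  · have hpj : pj x ∉ K ∪ X := by
      rw [Finset.mem_union]; push_neg; exact ⟨h1, h2⟩
    rw [Finset.mem_union] at hpj; push_neg at hpj
    exact Finset.disjoint_insert_left.2 ⟨hpj.2, hd⟩
  · refine Finset.disjoint_insert_left.2 ⟨?_, Finset.disjoint_insert_right.2 ⟨h3, hd⟩⟩
    rw [Finset.mem_insert]; push_neg; exact ⟨hne, h2⟩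

omit T hT in
lemma stepKX_bichrom {K X : Finset ℕ} {x : BallW}
    (hfresh : ¬(pj x ∈ K ∪ X ∧ pk x ∈ K ∪ X)) :
    (pj x ∈ (stepKX K X x).1 ∧ pk x ∈ (stepKX K X x).2) ∨
      (pj x ∈ (stepKX K X x).2 ∧ pk x ∈ (stepKX K X x).1) := by
  rw [stepKX]
  split_ifs with h1 h2 h3 h4
  · exact Or.inl ⟨h1, Finset.mem_insert_self _ _⟩
  · exact Or.inr ⟨h2, Finset.mem_insert_self _ _⟩
  · exact Or.inr ⟨Finset.mem_insert_self _ _, h3⟩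
  · exact Or.inl ⟨Finset.mem_insert_self _ _, h4⟩
  · exact Or.inl ⟨Finset.mem_insert_self _ _, Finset.mem_insert_self _ _⟩

def chain : ℕ → Finset ℕ × Finset ℕ
  | 0 => (∅, ∅)
  | n + 1 =>
    let c := chain n
    stepKX c.1 c.2 (pick T hT (c.1 ∪ c.2) n)

lemma chain_disjoint : ∀ n, Disjoint (chain T hT n).1 (chain T hT n).2 := by
  intro n
  induction n with
  | zero => simp [chain]
  | succ n ih =>
    have hfresh := pick_fresh T hT ((chain T hT n).1 ∪ (chain T hT n).2) n
    have hmem := pick_mem T hT ((chain T hT n).1 ∪ (chain T hT n).2) n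
    have hne : pj (pick T hT ((chain T hT n).1 ∪ (chain T hT n).2) n)
        ≠ pk (pick T hT ((chain T hT n).1 ∪ (chain T hT n).2) n) :=
      (pjk_spec ((hT n).1 hmem)).1.ne
    exact stepKX_disjoint ih hfresh hne

lemma chain_mono_succ (n : ℕ) :
    (chain T hT n).1 ⊆ (chain T hT (n + 1)).1 ∧ (chain T hT n).2 ⊆ (chain T hT (n + 1)).2 :=
  stepKX_mono _ _ _

lemma chain_mono {m n : ℕ} (h : m ≤ n) :
    (chain T hT m).1 ⊆ (chain T hT n).1 ∧ (chain T hT m).2 ⊆ (chain T hT n).2 := by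
  induction n, h using Nat.le_induction with
  | base => exact ⟨Finset.Subset.refl _, Finset.Subset.refl _⟩
  | succ n hmn ih =>
    exact ⟨ih.1.trans (chain_mono_succ T hT n).1, ih.2.trans (chain_mono_succ T hT n).2⟩

def KK : Set ℕ := ⋃ n, ((chain T hT n).1 : Set ℕ)

def ff : ℕ → ℝ := fun i => if i ∈ KK T hT then 1 else 0

lemma ff_bound : ∀ i, ‖ff T hT i‖ ≤ 1 := by
  intro i
  rw [ff]
  split_ifs <;> simp

lemma mem_KK_not_X {i : ℕ} (hi : i ∈ KK T hT) (m : ℕ) : i ∉ (chain T hT m).2 := by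
  intro hm
  obtain ⟨_, ⟨n, rfl⟩, hn⟩ := hi
  have h1 : i ∈ (chain T hT (max n m)).1 := (chain_mono T hT (le_max_left n m)).1 hn
  have h2 : i ∈ (chain T hT (max n m)).2 := (chain_mono T hT (le_max_right n m)).2 hm
  exact Finset.disjoint_left.1 (chain_disjoint T hT (max n m)) h1 h2

lemma ff_diff (n : ℕ) :
    ∃ x ∈ T n, ‖ff T hT (pj x) - ff T hT (pk x)‖ = 1 := by
  set F := (chain T hT n).1 ∪ (chain T hT n).2 with hF
  set x := pick T hT F n with hx
  refine ⟨x, pick_mem T hT F n, ?_⟩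
  have hbi := stepKX_bichrom (K := (chain T hT n).1) (X := (chain T hT n).2)
    (x := x) (pick_fresh T hT F n)
  have hstep : stepKX (chain T hT n).1 (chain T hT n).2 x = chain T hT (n + 1) := by
    rw [chain]
  rw [hstep] at hbi
  rcases hbi with ⟨hj, hk⟩ | ⟨hj, hk⟩
  · have h1 : ff T hT (pj x) = 1 := by
      rw [ff, if_pos]; exact Set.mem_iUnion.2 ⟨n + 1, hj⟩
    have h2 : ff T hT (pk x) = 0 := by
      rw [ff, if_neg]; intro hmem; exact mem_KK_not_X T hT hmem (n + 1) hk
    rw [h1, h2]; norm_num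
  · have h1 : ff T hT (pj x) = 0 := by
      rw [ff, if_neg]; intro hmem; exact mem_KK_not_X T hT hmem (n + 1) hj
    have h2 : ff T hT (pk x) = 1 := by
      rw [ff, if_pos]; exact Set.mem_iUnion.2 ⟨n + 1, hk⟩
    rw [h1, h2]; norm_num

end Greedy

end NPytk

/-- Proposition 3.3: the closed unit ball of `ℓ¹` with the weak topology does not have the
Pytkeev property. -/
theorem ball_ellOne_weak_not_pytkeev : ¬ PytkeevSpace BallW := by
  intro hPyt
  obtain ⟨S, hS, hU⟩ := hPyt NPytk.AK NPytk.x0 ⟨NPytk.zero_mem_closure, NPytk.x0_not_mem⟩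
  have hf := NPytk.ff_bound S hS
  set φ := NPytk.phi (NPytk.ff S hS) hf with hφ
  set U : Set BallW := {z | ‖φ ((toWeakSpace ℝ ellOne).symm z.1)‖ < 2⁻¹} with hUdef
  have hcont : Continuous fun z : BallW => φ ((toWeakSpace ℝ ellOne).symm z.1) := by
    have h1 : Continuous fun x : WeakSpace ℝ ellOne => (topDualPairing ℝ ellOne).flip x φ :=
      WeakBilin.eval_continuous _ φ
    exact h1.comp continuous_subtype_val
  have hUopen : IsOpen U := by
    have heq : U = (fun z : BallW => ‖φ ((toWeakSpace ℝ ellOne).symm z.1)‖) ⁻¹' (Set.Iio 2⁻¹) :=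
      rfl
    rw [heq]
    exact IsOpen.preimage hcont.norm isOpen_Iio
  have hUmem : U ∈ nhds NPytk.x0 := by
    refine hUopen.mem_nhds ?_
    show ‖φ ((toWeakSpace ℝ ellOne).symm (NPytk.x0).1)‖ < 2⁻¹
    have : (toWeakSpace ℝ ellOne).symm (NPytk.x0).1 = 0 := map_zero _
    rw [this, map_zero, norm_zero]
    norm_num
  obtain ⟨n, hn⟩ := hU U hUmem
  obtain ⟨x, hxT, hxval⟩ := NPytk.ff_diff S hS n
  have hxAK := (hS n).1 hxT
  have hspec := NPytk.pjk_spec hxAK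
  have hxU : ‖φ ((toWeakSpace ℝ ellOne).symm x.1)‖ < 2⁻¹ := hn hxT
  have hcoe : (toWeakSpace ℝ ellOne).symm x.1 = NPytk.vec (NPytk.pj x) (NPytk.pk x) := by
    have : x.1 = toWeakSpace ℝ ellOne (NPytk.vec (NPytk.pj x) (NPytk.pk x)) :=
      congrArg Subtype.val hspec.2
    rw [this, LinearEquiv.symm_apply_apply]
  rw [hcoe, hφ, NPytk.phi_vec, norm_mul, hxval] at hxU
  have : ‖(2⁻¹ : ℝ)‖ = 2⁻¹ := by rw [Real.norm_eq_abs]; norm_num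
  rw [this, mul_one] at hxU
  exact lt_irrefl _ hxU
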